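/- For a fixed n, the ratio |Σ(n,t)|/t^{(n−1)²} converges to a positive limit as t → ∞; this limit equals the volume ρ(n) of the polytope of n×n doubly stochastic matrices (suitably normalized). -/

import Mathlib

open Filter MeasureTheory Set Pointwise ENNReal

namespace MagicEhrhart

variable (m : ℕ)

/-- The dilate by `t` of the reduced Birkhoff polytope in the space of
`m × m` real blocks. -/
def Kt (t : ℝ) : Set (Fin m × Fin m → ℝ) :=
  {x | (∀ p, 0 ≤ x p) ∧ (∀ i : Fin m, ∑ j, x (i, j) ≤ t) ∧
    (∀ j : Fin m, ∑ i, x (i, j) ≤ t) ∧ t * ((m : ℝ) - 1) ≤ ∑ p, x p}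

lemma Kt_isClosed (t : ℝ) : IsClosed (Kt m t) := by
  have hc : ∀ p : Fin m × Fin m, Continuous fun x : Fin m × Fin m → ℝ => x p :=
    fun p => continuous_apply p
  have he : Kt m t = (⋂ p, {x : Fin m × Fin m → ℝ | 0 ≤ x p}) ∩
      ((⋂ i : Fin m, {x : Fin m × Fin m → ℝ | ∑ j, x (i, j) ≤ t}) ∩
      ((⋂ j : Fin m, {x : Fin m × Fin m → ℝ | ∑ i, x (i, j) ≤ t}) ∩
      {x : Fin m × Fin m → ℝ | t * ((m : ℝ) - 1) ≤ ∑ p, x p})) := by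
    ext x
    simp [Kt, Set.mem_iInter, Set.mem_setOf_eq]
  rw [he]
  refine IsClosed.inter (isClosed_iInter fun p => isClosed_le continuous_const (hc p))
    (IsClosed.inter (isClosed_iInter fun i =>
      isClosed_le (continuous_finset_sum _ fun j _ => hc (i, j)) continuous_const)
    (IsClosed.inter (isClosed_iInter fun j =>
      isClosed_le (continuous_finset_sum _ fun i _ => hc (i, j)) continuous_const)
    (isClosed_le continuous_const (continuous_finset_sum _ fun p _ => hc p))))

lemma Kt_measurable (t : ℝ) : MeasurableSet (Kt m t) :=
  (Kt_isClosed m t).measurableSet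

lemma Kt_coord_le {t : ℝ} {x : Fin m × Fin m → ℝ} (hx : x ∈ Kt m t)
    (p : Fin m × Fin m) : x p ≤ t := by
  obtain ⟨h1, h2, _, _⟩ := hx
  calc x p = x (p.1, p.2) := by simp
  _ ≤ ∑ j, x (p.1, j) :=
      Finset.single_le_sum (fun j _ => h1 (p.1, j)) (Finset.mem_univ p.2)
  _ ≤ t := h2 p.1

lemma Kt_subset_box (t : ℝ) : Kt m t ⊆ univ.pi fun _ => Icc (0:ℝ) t := by
  intro x hx
  rw [Set.mem_pi]
  exact fun p _ => ⟨hx.1 p, Kt_coord_le m hx p⟩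

lemma volume_Kt_one_ne_top : volume (Kt m 1) ≠ ⊤ := by
  have h := measure_mono (μ := volume) (Kt_subset_box m 1)
  rw [volume_pi_pi] at h
  simp only [Real.volume_Icc, sub_zero, ENNReal.ofReal_one, Finset.prod_const_one] at h
  exact (lt_of_le_of_lt h ENNReal.one_lt_top).ne

lemma box_subset_Kt :
    (univ.pi fun _ : Fin m × Fin m =>
      Icc (((m:ℝ)+1)⁻¹ - ((m:ℝ)+1)⁻¹^3) (((m:ℝ)+1)⁻¹ + ((m:ℝ)+1)⁻¹^3)) ⊆ Kt m 1 := by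
  intro x hx
  rw [Set.mem_pi] at hx
  set M := (m:ℝ) with hMdef
  have hM : (0:ℝ) ≤ M := Nat.cast_nonneg m
  set c := (M+1)⁻¹ with hcdef
  have hc0 : 0 < c := by positivity
  have hc1 : c ≤ 1 := by
    rw [hcdef]
    rw [inv_le_one_iff₀]
    right; linarith
  have hcM : c * (M + 1) = 1 := by
    rw [hcdef]; field_simp
  have hlo : ∀ p : Fin m × Fin m, c - c^3 ≤ x p := fun p => (hx p (mem_univ p)).1
  have hhi : ∀ p : Fin m × Fin m, x p ≤ c + c^3 := fun p => (hx p (mem_univ p)).2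
  have hM1 : M + 1 ≠ 0 := by positivity
  have hMc : M * c = 1 - c := by rw [hcdef]; field_simp; ring
  have hMc3 : M * c^3 = (1 - c) * c^2 := by linear_combination c^2 * hMc
  have hMMc : M * M * c = M - (1 - c) := by rw [hcdef]; field_simp; ring
  have hMMc3 : M * M * c^3 = (1 - c)^2 * c := by rw [hcdef]; field_simp; ring
  have hc3 : c^3 ≤ c := by nlinarith [sq_nonneg c, sq_nonneg (1 - c)]
  have hrow : M * (c + c^3) ≤ 1 := by
    nlinarith [mul_nonneg hc0.le (sq_nonneg (1 - c)), sq_nonneg c]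
  refine ⟨fun p => by linarith [hlo p, hc3], fun i => ?_, fun j => ?_, ?_⟩
  · calc ∑ j, x (i, j) ≤ ∑ _j : Fin m, (c + c^3) :=
        Finset.sum_le_sum fun j _ => hhi (i, j)
    _ = M * (c + c^3) := by
        rw [Finset.sum_const, Finset.card_univ, Fintype.card_fin, nsmul_eq_mul]
    _ ≤ 1 := hrow
  · calc ∑ i, x (i, j) ≤ ∑ _i : Fin m, (c + c^3) :=
        Finset.sum_le_sum fun i _ => hhi (i, j)
    _ = M * (c + c^3) := by
        rw [Finset.sum_const, Finset.card_univ, Fintype.card_fin, nsmul_eq_mul]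
    _ ≤ 1 := hrow
  · have hsum : (M * M) * (c - c^3) ≤ ∑ p, x p := by
      calc (M * M) * (c - c^3) = ∑ _p : Fin m × Fin m, (c - c^3) := by
            rw [Finset.sum_const, Finset.card_univ, Fintype.card_prod, Fintype.card_fin,
              nsmul_eq_mul]
            push_cast; ring
      _ ≤ ∑ p, x p := Finset.sum_le_sum fun p _ => hlo p
    nlinarith [hsum, hMMc, hMMc3, mul_nonneg (sq_nonneg c) (by linarith : (0:ℝ) ≤ 2 - c)]

lemma volume_Kt_one_ne_zero : volume (Kt m 1) ≠ 0 := by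
  have h := measure_mono (μ := volume) (box_subset_Kt m)
  rw [volume_pi_pi] at h
  intro h0
  rw [h0] at h
  simp only [le_zero_iff, Finset.prod_const, Real.volume_Icc] at h
  have hρ : (0:ℝ) < ((m:ℝ)+1)⁻¹^3 := by positivity
  have : ((m:ℝ)+1)⁻¹ + ((m:ℝ)+1)⁻¹^3 - (((m:ℝ)+1)⁻¹ - ((m:ℝ)+1)⁻¹^3)
      = 2 * ((m:ℝ)+1)⁻¹^3 := by ring
  rw [this] at h
  exact (pow_ne_zero _ (by simp only [ne_eq, ENNReal.ofReal_eq_zero, not_le]; linarith)) h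

lemma Kt_eq_smul {t : ℝ} (ht : 0 < t) : Kt m t = t • Kt m 1 := by
  ext x
  rw [Set.mem_smul_set_iff_inv_smul_mem₀ ht.ne']
  have hti : 0 < t⁻¹ := inv_pos.mpr ht
  constructor
  · rintro ⟨h1, h2, h3, h4⟩
    refine ⟨fun p => mul_nonneg hti.le (h1 p), fun i => ?_, fun j => ?_, ?_⟩
    · simp only [Pi.smul_apply, smul_eq_mul]
      rw [← Finset.mul_sum]
      calc t⁻¹ * ∑ j, x (i, j) ≤ t⁻¹ * t :=
          mul_le_mul_of_nonneg_left (h2 i) hti.le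
      _ = 1 := inv_mul_cancel₀ ht.ne'
    · simp only [Pi.smul_apply, smul_eq_mul]
      rw [← Finset.mul_sum]
      calc t⁻¹ * ∑ i, x (i, j) ≤ t⁻¹ * t :=
          mul_le_mul_of_nonneg_left (h3 j) hti.le
      _ = 1 := inv_mul_cancel₀ ht.ne'
    · simp only [Pi.smul_apply, smul_eq_mul]
      rw [← Finset.mul_sum]
      have := mul_le_mul_of_nonneg_left h4 hti.le
      calc (1:ℝ) * ((m:ℝ) - 1) = t⁻¹ * (t * ((m:ℝ) - 1)) := by
            field_simp
      _ ≤ t⁻¹ * ∑ p, x p := this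
  · rintro ⟨h1, h2, h3, h4⟩
    simp only [Pi.smul_apply, smul_eq_mul] at h1 h2 h3 h4
    refine ⟨fun p => ?_, fun i => ?_, fun j => ?_, ?_⟩
    · have := h1 p
      nlinarith
    · have h := h2 i
      rw [← Finset.mul_sum] at h
      calc ∑ j, x (i, j) = t * (t⁻¹ * ∑ j, x (i, j)) := by field_simp
      _ ≤ t * 1 := mul_le_mul_of_nonneg_left h ht.le
      _ = t := mul_one t
    · have h := h3 j
      rw [← Finset.mul_sum] at h
      calc ∑ i, x (i, j) = t * (t⁻¹ * ∑ i, x (i, j)) := by field_simp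
      _ ≤ t * 1 := mul_le_mul_of_nonneg_left h ht.le
      _ = t := mul_one t
    · have h := h4
      rw [← Finset.mul_sum] at h
      have := mul_le_mul_of_nonneg_left h ht.le
      calc t * ((m:ℝ) - 1) = t * (1 * ((m:ℝ) - 1)) := by ring
      _ ≤ t * (t⁻¹ * ∑ p, x p) := this
      _ = ∑ p, x p := by field_simp

lemma finrank_eq : Module.finrank ℝ (Fin m × Fin m → ℝ) = m * m := by
  simp [Module.finrank_pi]

lemma volume_Kt {t : ℝ} (ht : 0 < t) :
    volume (Kt m t) = ENNReal.ofReal (t ^ (m * m)) * volume (Kt m 1) := by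
  rw [Kt_eq_smul m ht, Measure.addHaar_smul, finrank_eq,
    abs_of_nonneg (pow_nonneg ht.le _)]

/-- The key shift lemma: adding a bounded perturbation plus the constant
`(m+1)^2` to a point of `Kt u` lands in `Kt (u + (m+1)^3)`. -/
lemma shift_mem {u : ℝ} {z y : Fin m × Fin m → ℝ} (hz : z ∈ Kt m u)
    (hy : ∀ p, |y p| ≤ 1) :
    (fun p => z p + y p + ((m:ℝ)+1)^2) ∈ Kt m (u + ((m:ℝ)+1)^3) := by
  obtain ⟨h1, h2, h3, h4⟩ := hz
  have hy1 : ∀ p, -1 ≤ y p := fun p => (abs_le.mp (hy p)).1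
  have hy2 : ∀ p, y p ≤ 1 := fun p => (abs_le.mp (hy p)).2
  have hM : (0:ℝ) ≤ (m:ℝ) := Nat.cast_nonneg m
  have esum : ∀ (f g : Fin m → ℝ),
      ∑ j, (f j + g j + ((m:ℝ)+1)^2) = (∑ j, f j) + (∑ j, g j) + (m:ℝ) * ((m:ℝ)+1)^2 := by
    intro f g
    rw [Finset.sum_add_distrib, Finset.sum_add_distrib, Finset.sum_const,
      Finset.card_univ, Fintype.card_fin, nsmul_eq_mul]
  simp only [Kt, Set.mem_setOf_eq]
  refine ⟨fun p => by nlinarith [h1 p, hy1 p], fun i => ?_, fun j => ?_, ?_⟩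
  · rw [esum (fun j => z (i, j)) (fun j => y (i, j))]
    have hys : ∑ j, y (i, j) ≤ (m:ℝ) := by
      calc ∑ j, y (i, j) ≤ ∑ _j : Fin m, (1:ℝ) :=
          Finset.sum_le_sum fun j _ => hy2 (i, j)
      _ = (m:ℝ) := by simp
    nlinarith [h2 i]
  · rw [esum (fun i => z (i, j)) (fun i => y (i, j))]
    have hys : ∑ i, y (i, j) ≤ (m:ℝ) := by
      calc ∑ i, y (i, j) ≤ ∑ _i : Fin m, (1:ℝ) :=
          Finset.sum_le_sum fun i _ => hy2 (i, j)
      _ = (m:ℝ) := by simp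
    nlinarith [h3 j]
  · have e : ∑ p : Fin m × Fin m, (z p + y p + ((m:ℝ)+1)^2)
        = (∑ p, z p) + (∑ p, y p) + ((m:ℝ) * (m:ℝ)) * ((m:ℝ)+1)^2 := by
      rw [Finset.sum_add_distrib, Finset.sum_add_distrib, Finset.sum_const,
        Finset.card_univ, Fintype.card_prod, Fintype.card_fin, nsmul_eq_mul]
      push_cast; ring
    rw [e]
    have hys : -((m:ℝ) * (m:ℝ)) ≤ ∑ p, y p := by
      calc -((m:ℝ) * (m:ℝ)) = ∑ _p : Fin m × Fin m, (-1 : ℝ) := by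
            rw [Finset.sum_const, Finset.card_univ, Fintype.card_prod, Fintype.card_fin,
              nsmul_eq_mul]
            push_cast; ring
      _ ≤ ∑ p, y p := Finset.sum_le_sum fun p _ => hy1 p
    nlinarith [h4]

/-- Componentwise floor. -/
noncomputable def Fl (x : Fin m × Fin m → ℝ) : Fin m × Fin m → ℤ := fun p => ⌊x p⌋

/-- Half-open unit cube based at an integer vector. -/
def cube (ν : Fin m × Fin m → ℤ) : Set (Fin m × Fin m → ℝ) := Fl m ⁻¹' {ν}

lemma cube_eq (ν : Fin m × Fin m → ℤ) :
    cube m ν = univ.pi fun p => Ico ((ν p : ℝ)) ((ν p : ℝ) + 1) := by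
  ext x
  simp [cube, Fl, funext_iff, Int.floor_eq_iff, Set.mem_pi, Set.mem_Ico]

lemma cube_measurable (ν : Fin m × Fin m → ℤ) : MeasurableSet (cube m ν) := by
  rw [cube_eq]
  exact MeasurableSet.univ_pi fun p => measurableSet_Ico

lemma volume_cube (ν : Fin m × Fin m → ℤ) : volume (cube m ν) = 1 := by
  rw [cube_eq, volume_pi_pi]
  simp [Real.volume_Ico]

/-- Lattice points in the dilate. -/
def Lt (t : ℝ) : Set (Fin m × Fin m → ℤ) := {ν | (fun p => (ν p : ℝ)) ∈ Kt m t}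

lemma Lt_finite (t : ℝ) : (Lt m t).Finite := by
  apply Set.Finite.subset (Set.Finite.pi fun _ : Fin m × Fin m => Set.finite_Icc (0:ℤ) ⌈t⌉)
  intro ν hν
  rw [Set.mem_pi]
  intro p _
  rw [Set.mem_Icc]
  constructor
  · simpa using hν.1 p
  · have h1 : (ν p : ℝ) ≤ t := Kt_coord_le m hν p
    have h2 : (ν p : ℝ) ≤ (⌈t⌉ : ℝ) := h1.trans (Int.le_ceil t)
    exact_mod_cast h2

lemma card_Lt_le (t : ℝ) :
    ((Lt m t).ncard : ℝ≥0∞) ≤ volume (Kt m (t + ((m:ℝ)+1)^3)) := by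
  classical
  set F := (Lt_finite m t).toFinset with hF
  have hdisj : (F : Set (Fin m × Fin m → ℤ)).PairwiseDisjoint (cube m) := by
    intro a _ b _ hab
    exact Disjoint.preimage (Fl m) (by simpa using hab)
  have hmeas := measure_biUnion_finset (μ := volume) hdisj fun ν _ => cube_measurable m ν
  have hcard : ((Lt m t).ncard : ℝ≥0∞) = volume (⋃ ν ∈ F, cube m ν) := by
    rw [hmeas]
    simp only [volume_cube, Finset.sum_const, nsmul_eq_mul, mul_one]
    rw [Set.ncard_eq_toFinset_card _ (Lt_finite m t)]
  rw [hcard]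
  have hsub : (⋃ ν ∈ F, cube m ν) ⊆
      (fun x => x + fun _ => ((m:ℝ)+1)^2) ⁻¹' Kt m (t + ((m:ℝ)+1)^3) := by
    intro x hx
    simp only [Set.mem_iUnion] at hx
    obtain ⟨ν, hν, hx⟩ := hx
    have hνK : (fun p => (ν p : ℝ)) ∈ Kt m t := by
      have := (Lt_finite m t).mem_toFinset.mp hν
      exact this
    have hfl : ∀ p, ⌊x p⌋ = ν p := fun p => congrFun hx p
    have hy : ∀ p, |x p - (ν p : ℝ)| ≤ 1 := by
      intro p
      rw [abs_le]
      have h := Int.floor_eq_iff.mp (hfl p)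
      constructor <;> [linarith [h.1]; linarith [h.2]]
    have := shift_mem m hνK hy
    have he : (fun p => (ν p : ℝ) + (x p - (ν p : ℝ)) + ((m:ℝ)+1)^2)
        = (fun p => x p + ((m:ℝ)+1)^2) := by
      funext p; ring
    rw [he] at this
    exact this
  calc volume (⋃ ν ∈ F, cube m ν)
      ≤ volume ((fun x => x + fun _ => ((m:ℝ)+1)^2) ⁻¹' Kt m (t + ((m:ℝ)+1)^3)) :=
        measure_mono hsub
  _ = volume (Kt m (t + ((m:ℝ)+1)^3)) :=
        measure_preimage_add_right volume _ _

lemma le_card_Lt (t : ℝ) :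
    volume (Kt m (t - ((m:ℝ)+1)^3)) ≤ ((Lt m t).ncard : ℝ≥0∞) := by
  classical
  set F := (Lt_finite m t).toFinset with hF
  have hdisj : (F : Set (Fin m × Fin m → ℤ)).PairwiseDisjoint (cube m) := by
    intro a _ b _ hab
    exact Disjoint.preimage (Fl m) (by simpa using hab)
  have hmeas := measure_biUnion_finset (μ := volume) hdisj fun ν _ => cube_measurable m ν
  have hcard : volume (⋃ ν ∈ F, cube m ν) = ((Lt m t).ncard : ℝ≥0∞) := by
    rw [hmeas]
    simp only [volume_cube, Finset.sum_const, nsmul_eq_mul, mul_one]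
    rw [Set.ncard_eq_toFinset_card _ (Lt_finite m t)]
  have hsub : ((fun x => x + (fun _ : Fin m × Fin m => -(((m:ℝ)+1)^2))) ⁻¹'
        Kt m (t - ((m:ℝ)+1)^3)) ⊆ ⋃ ν ∈ F, cube m ν := by
    intro x hx
    have hx' : (fun p : Fin m × Fin m => x p + -(((m:ℝ)+1)^2)) ∈ Kt m (t - ((m:ℝ)+1)^3) := hx
    have hy : ∀ p, |((⌊x p⌋ : ℝ)) - x p| ≤ 1 := by
      intro p
      rw [abs_le]
      have h1 := Int.floor_le (x p)
      have h2 := Int.lt_floor_add_one (x p)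
      constructor <;> linarith
    have h5 := shift_mem m hx' hy
    have he : (fun p => (x p + -(((m:ℝ)+1)^2)) + ((⌊x p⌋ : ℝ) - x p) + ((m:ℝ)+1)^2)
        = fun p => ((⌊x p⌋ : ℝ)) := by
      funext p; ring
    rw [he, sub_add_cancel] at h5
    have hmem : Fl m x ∈ Lt m t := h5
    simp only [Set.mem_iUnion]
    exact ⟨Fl m x, (Lt_finite m t).mem_toFinset.mpr hmem, rfl⟩
  calc volume (Kt m (t - ((m:ℝ)+1)^3))
      = volume ((fun x => x + (fun _ : Fin m × Fin m => -(((m:ℝ)+1)^2))) ⁻¹'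
          Kt m (t - ((m:ℝ)+1)^3)) :=
        (measure_preimage_add_right volume _ _).symm
  _ ≤ volume (⋃ ν ∈ F, cube m ν) := measure_mono hsub
  _ = ((Lt m t).ncard : ℝ≥0∞) := hcard

/-- Integer characterization of lattice points. -/
lemma mem_Lt_iff {t : ℕ} {ν : Fin m × Fin m → ℤ} :
    ν ∈ Lt m t ↔ (∀ p, 0 ≤ ν p) ∧ (∀ i : Fin m, ∑ j, ν (i, j) ≤ (t:ℤ)) ∧
      (∀ j : Fin m, ∑ i, ν (i, j) ≤ (t:ℤ)) ∧ ((m:ℤ) - 1) * t ≤ ∑ p, ν p := by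
  simp only [Lt, Kt, Set.mem_setOf_eq]
  constructor
  · rintro ⟨h1, h2, h3, h4⟩
    refine ⟨fun p => by exact_mod_cast h1 p, fun i => by exact_mod_cast h2 i,
      fun j => by exact_mod_cast h3 j, ?_⟩
    rw [mul_comm] at h4
    exact_mod_cast h4
  · rintro ⟨h1, h2, h3, h4⟩
    rw [mul_comm ((m:ℤ) - 1) (t:ℤ)] at h4
    exact ⟨fun p => by exact_mod_cast h1 p, fun i => by exact_mod_cast h2 i,
      fun j => by exact_mod_cast h3 j, by exact_mod_cast h4⟩

/-- Forward map: top-left block of a magic square. -/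
def Phi (D : Matrix (Fin (m+1)) (Fin (m+1)) ℕ) : Fin m × Fin m → ℤ :=
  fun p => (D p.1.castSucc p.2.castSucc : ℤ)

/-- The set of magic squares with line sums `t`. -/
def MS (t : ℕ) : Set (Matrix (Fin (m+1)) (Fin (m+1)) ℕ) :=
  {D | (∀ i, ∑ j, D i j = t) ∧ (∀ j, ∑ i, D i j = t)}

lemma Phi_injOn (t : ℕ) : Set.InjOn (Phi m) (MS m t) := by
  rintro D ⟨hr, hc⟩ D' ⟨hr', hc'⟩ h
  have hb : ∀ i' j' : Fin m, D i'.castSucc j'.castSucc = D' i'.castSucc j'.castSucc := by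
    intro i' j'
    have h2 := congrFun h (i', j')
    simp only [Phi] at h2
    exact_mod_cast h2
  have hbs : ∀ i' : Fin m, ∑ j' : Fin m, D i'.castSucc j'.castSucc
      = ∑ j' : Fin m, D' i'.castSucc j'.castSucc :=
    fun i' => Finset.sum_congr rfl fun j' _ => hb i' j'
  have hbs' : ∀ j' : Fin m, ∑ i' : Fin m, D i'.castSucc j'.castSucc
      = ∑ i' : Fin m, D' i'.castSucc j'.castSucc :=
    fun j' => Finset.sum_congr rfl fun i' _ => hb i' j'
  have hlc : ∀ i' : Fin m, D i'.castSucc (Fin.last m) = D' i'.castSucc (Fin.last m) := by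
    intro i'
    have h1 := hr i'.castSucc
    have h2 := hr' i'.castSucc
    rw [Fin.sum_univ_castSucc] at h1 h2
    rw [hbs i'] at h1
    omega
  have hlr : ∀ j' : Fin m, D (Fin.last m) j'.castSucc = D' (Fin.last m) j'.castSucc := by
    intro j'
    have h1 := hc j'.castSucc
    have h2 := hc' j'.castSucc
    rw [Fin.sum_univ_castSucc] at h1 h2
    rw [hbs' j'] at h1
    omega
  have hll : D (Fin.last m) (Fin.last m) = D' (Fin.last m) (Fin.last m) := by
    have h1 := hr (Fin.last m)
    have h2 := hr' (Fin.last m)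
    rw [Fin.sum_univ_castSucc] at h1 h2
    rw [Finset.sum_congr rfl fun j' _ => hlr j'] at h1
    omega
  ext i j
  induction i using Fin.lastCases with
  | last =>
    induction j using Fin.lastCases with
    | last => exact hll
    | cast j' => exact hlr j'
  | cast i' =>
    induction j using Fin.lastCases with
    | last => exact hlc i'
    | cast j' => exact hb i' j'

/-- Completion of an admissible block to a magic square. -/
def compMat (t : ℕ) (ν : Fin m × Fin m → ℤ) :
    Matrix (Fin (m+1)) (Fin (m+1)) ℕ :=
  fun i => Fin.lastCases
    (Fin.lastCases ((∑ p, ν p - ((m:ℤ) - 1) * t).toNat)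
      (fun j' => ((t:ℤ) - ∑ i' : Fin m, ν (i', j')).toNat))
    (fun i' => Fin.lastCases (((t:ℤ) - ∑ j' : Fin m, ν (i', j')).toNat)
      (fun j' => (ν (i', j')).toNat)) i

lemma compMat_cc (t : ℕ) (ν : Fin m × Fin m → ℤ) (i' j' : Fin m) :
    compMat m t ν i'.castSucc j'.castSucc = (ν (i', j')).toNat := by
  simp [compMat]

lemma compMat_cl (t : ℕ) (ν : Fin m × Fin m → ℤ) (i' : Fin m) :
    compMat m t ν i'.castSucc (Fin.last m)
      = ((t:ℤ) - ∑ j' : Fin m, ν (i', j')).toNat := by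
  simp [compMat]

lemma compMat_lc (t : ℕ) (ν : Fin m × Fin m → ℤ) (j' : Fin m) :
    compMat m t ν (Fin.last m) j'.castSucc
      = ((t:ℤ) - ∑ i' : Fin m, ν (i', j')).toNat := by
  simp [compMat]

lemma compMat_ll (t : ℕ) (ν : Fin m × Fin m → ℤ) :
    compMat m t ν (Fin.last m) (Fin.last m)
      = (∑ p, ν p - ((m:ℤ) - 1) * t).toNat := by
  simp [compMat]

lemma Phi_image (t : ℕ) : Phi m '' MS m t = Lt m t := by
  apply Set.Subset.antisymm
  · rintro _ ⟨D, ⟨hr, hc⟩, rfl⟩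
    rw [mem_Lt_iff]
    have hrow : ∀ i' : Fin m, ∑ j' : Fin m, (D i'.castSucc j'.castSucc : ℤ)
        = (t : ℤ) - D i'.castSucc (Fin.last m) := by
      intro i'
      have h := hr i'.castSucc
      rw [Fin.sum_univ_castSucc] at h
      have h2 := congrArg (Nat.cast : ℕ → ℤ) h
      push_cast at h2
      linarith
    have hlast : ∑ i' : Fin m, (D i'.castSucc (Fin.last m) : ℤ) ≤ (t:ℤ) := by
      have h := hc (Fin.last m)
      rw [Fin.sum_univ_castSucc] at h
      have h2 := congrArg (Nat.cast : ℕ → ℤ) h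
      push_cast at h2
      have := Int.natCast_nonneg (D (Fin.last m) (Fin.last m))
      linarith
    refine ⟨fun p => Int.natCast_nonneg _, fun i' => ?_, fun j' => ?_, ?_⟩
    · show ∑ j' : Fin m, (D i'.castSucc j'.castSucc : ℤ) ≤ (t:ℤ)
      rw [hrow i']
      exact sub_le_self _ (Int.natCast_nonneg _)
    · show ∑ i' : Fin m, (D i'.castSucc j'.castSucc : ℤ) ≤ (t:ℤ)
      have h := hc j'.castSucc
      rw [Fin.sum_univ_castSucc] at h
      have h2 := congrArg (Nat.cast : ℕ → ℤ) h
      push_cast at h2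
      have := Int.natCast_nonneg (D (Fin.last m) j'.castSucc)
      linarith
    · show ((m:ℤ) - 1) * t ≤ ∑ p : Fin m × Fin m, (D p.1.castSucc p.2.castSucc : ℤ)
      rw [Fintype.sum_prod_type]
      have he : ∑ i' : Fin m, ∑ j' : Fin m, (D i'.castSucc j'.castSucc : ℤ)
          = (m:ℤ) * t - ∑ i' : Fin m, (D i'.castSucc (Fin.last m) : ℤ) := by
        rw [Finset.sum_congr rfl fun i' _ => hrow i', Finset.sum_sub_distrib,
          Finset.sum_const, Finset.card_univ, Fintype.card_fin, nsmul_eq_mul]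
      rw [he]
      linarith [hlast]
  · intro ν hν
    have hmem := hν
    rw [mem_Lt_iff] at hmem
    obtain ⟨h1, h2, h3, h4⟩ := hmem
    have hc3 : ∀ p : Fin m × Fin m, (((ν p).toNat : ℕ) : ℤ) = ν p :=
      fun p => Int.toNat_of_nonneg (h1 p)
    have hc4 : ∀ i' : Fin m, ((((t:ℤ) - ∑ j' : Fin m, ν (i', j')).toNat : ℕ) : ℤ)
        = (t:ℤ) - ∑ j' : Fin m, ν (i', j') :=
      fun i' => Int.toNat_of_nonneg (by linarith [h2 i'])
    have hc1 : ∀ j' : Fin m, ((((t:ℤ) - ∑ i' : Fin m, ν (i', j')).toNat : ℕ) : ℤ)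
        = (t:ℤ) - ∑ i' : Fin m, ν (i', j') :=
      fun j' => Int.toNat_of_nonneg (by linarith [h3 j'])
    have hc2 : (((∑ p, ν p - ((m:ℤ) - 1) * t).toNat : ℕ) : ℤ)
        = ∑ p, ν p - ((m:ℤ) - 1) * t :=
      Int.toNat_of_nonneg (by linarith [h4])
    have htot : ∑ p : Fin m × Fin m, ν p = ∑ i' : Fin m, ∑ j' : Fin m, ν (i', j') :=
      Fintype.sum_prod_type _
    have htot' : ∑ p : Fin m × Fin m, ν p = ∑ j' : Fin m, ∑ i' : Fin m, ν (i', j') := by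
      rw [htot]; exact Finset.sum_comm ..
    refine ⟨compMat m t ν, ⟨fun i => ?_, fun j => ?_⟩, ?_⟩
    · induction i using Fin.lastCases with
      | last =>
        have key : ((∑ j, compMat m t ν (Fin.last m) j : ℕ) : ℤ) = (t:ℤ) := by
          rw [Fin.sum_univ_castSucc]
          push_cast [compMat_lc, compMat_ll]
          rw [Finset.sum_congr rfl fun j' _ => hc1 j', hc2, Finset.sum_sub_distrib,
            Finset.sum_const, Finset.card_univ, Fintype.card_fin, nsmul_eq_mul, htot']
          ring
        exact_mod_cast key
      | cast i' =>
        have key : ((∑ j, compMat m t ν i'.castSucc j : ℕ) : ℤ) = (t:ℤ) := by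
          rw [Fin.sum_univ_castSucc]
          push_cast [compMat_cc, compMat_cl]
          rw [Finset.sum_congr rfl fun j' _ => hc3 (i', j'), hc4 i']
          ring
        exact_mod_cast key
    · induction j using Fin.lastCases with
      | last =>
        have key : ((∑ i, compMat m t ν i (Fin.last m) : ℕ) : ℤ) = (t:ℤ) := by
          rw [Fin.sum_univ_castSucc]
          push_cast [compMat_cl, compMat_ll]
          rw [Finset.sum_congr rfl fun i' _ => hc4 i', hc2, Finset.sum_sub_distrib,
            Finset.sum_const, Finset.card_univ, Fintype.card_fin, nsmul_eq_mul, htot]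
          ring
        exact_mod_cast key
      | cast j' =>
        have key : ((∑ i, compMat m t ν i j'.castSucc : ℕ) : ℤ) = (t:ℤ) := by
          rw [Fin.sum_univ_castSucc]
          push_cast [compMat_cc, compMat_lc]
          rw [Finset.sum_congr rfl fun i' _ => hc3 (i', j'), hc1 j']
          ring
        exact_mod_cast key
    · funext p
      obtain ⟨a, b⟩ := p
      show (compMat m t ν a.castSucc b.castSucc : ℤ) = ν (a, b)
      rw [compMat_cc]
      exact hc3 (a, b)

lemma ncard_MS (t : ℕ) : (MS m t).ncard = (Lt m (t:ℝ)).ncard := by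
  rw [← Phi_image m t, Set.ncard_image_of_injOn (Phi_injOn m t)]

lemma volume_pos : 0 < (volume (Kt m 1)).toReal :=
  ENNReal.toReal_pos (volume_Kt_one_ne_zero m) (volume_Kt_one_ne_top m)

lemma card_bounds {t : ℕ} (ht : ((m:ℝ)+1)^3 < (t:ℝ)) :
    ((t:ℝ) - ((m:ℝ)+1)^3) ^ (m*m) * (volume (Kt m 1)).toReal ≤ ((Lt m (t:ℝ)).ncard : ℝ) ∧
    ((Lt m (t:ℝ)).ncard : ℝ) ≤ ((t:ℝ) + ((m:ℝ)+1)^3) ^ (m*m) * (volume (Kt m 1)).toReal := by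
  have hs : (0:ℝ) < ((m:ℝ)+1)^3 := by positivity
  have h1 : (0:ℝ) < (t:ℝ) - ((m:ℝ)+1)^3 := by linarith
  have h2 : (0:ℝ) < (t:ℝ) + ((m:ℝ)+1)^3 := by linarith
  have hlo := le_card_Lt m (t:ℝ)
  have hhi := card_Lt_le m (t:ℝ)
  rw [volume_Kt m h1] at hlo
  rw [volume_Kt m h2] at hhi
  constructor
  · have hmono := ENNReal.toReal_mono (ENNReal.natCast_ne_top _) hlo
    rwa [ENNReal.toReal_mul, ENNReal.toReal_ofReal (by positivity),
      ENNReal.toReal_natCast] at hmono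
  · have hne : ENNReal.ofReal (((t:ℝ) + ((m:ℝ)+1)^3) ^ (m*m)) * volume (Kt m 1) ≠ ⊤ :=
      ENNReal.mul_ne_top ENNReal.ofReal_ne_top (volume_Kt_one_ne_top m)
    have hmono := ENNReal.toReal_mono hne hhi
    rwa [ENNReal.toReal_mul, ENNReal.toReal_ofReal (by positivity),
      ENNReal.toReal_natCast] at hmono

lemma main_tendsto :
    Tendsto (fun t : ℕ => ((Lt m (t:ℝ)).ncard : ℝ) / (t:ℝ) ^ (m*m)) atTop
      (nhds ((volume (Kt m 1)).toReal)) := by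
  set V := (volume (Kt m 1)).toReal with hV
  set s := ((m:ℝ)+1)^3 with hsdef
  have hs : (0:ℝ) < s := by positivity
  have hdiv : Tendsto (fun t : ℕ => s / (t:ℝ)) atTop (nhds 0) :=
    tendsto_const_div_atTop_nhds_zero_nat s
  have hg : Tendsto (fun t : ℕ => (1 - s / (t:ℝ)) ^ (m*m) * V) atTop (nhds V) := by
    have h0 : Tendsto (fun t : ℕ => 1 - s / (t:ℝ)) atTop (nhds 1) := by
      simpa using (tendsto_const_nhds (x := (1:ℝ)) (f := atTop)).sub hdiv
    have h1 := (h0.pow (m*m)).mul_const V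
    simpa using h1
  have hh : Tendsto (fun t : ℕ => (1 + s / (t:ℝ)) ^ (m*m) * V) atTop (nhds V) := by
    have h0 : Tendsto (fun t : ℕ => 1 + s / (t:ℝ)) atTop (nhds 1) := by
      simpa using (tendsto_const_nhds (x := (1:ℝ)) (f := atTop)).add hdiv
    have h1 := (h0.pow (m*m)).mul_const V
    simpa using h1
  apply tendsto_of_tendsto_of_tendsto_of_le_of_le' hg hh
  · filter_upwards [eventually_gt_atTop ⌈s⌉₊] with t htc
    have ht : s < (t:ℝ) := lt_of_le_of_lt (Nat.le_ceil s) (by exact_mod_cast htc)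
    have ht0 : (0:ℝ) < (t:ℝ) := lt_trans hs ht
    have hb := (card_bounds m ht).1
    have he : (1 - s / (t:ℝ)) = ((t:ℝ) - s) / (t:ℝ) := by
      field_simp
    rw [he, div_pow, div_mul_eq_mul_div]
    exact (div_le_div_iff_of_pos_right (by positivity : (0:ℝ) < (t:ℝ) ^ (m*m))).mpr hb
  · filter_upwards [eventually_gt_atTop ⌈s⌉₊] with t htc
    have ht : s < (t:ℝ) := lt_of_le_of_lt (Nat.le_ceil s) (by exact_mod_cast htc)
    have ht0 : (0:ℝ) < (t:ℝ) := lt_trans hs ht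
    have hb := (card_bounds m ht).2
    have he : (1 + s / (t:ℝ)) = ((t:ℝ) + s) / (t:ℝ) := by
      field_simp
    rw [he, div_pow, div_mul_eq_mul_div]
    exact (div_le_div_iff_of_pos_right (by positivity : (0:ℝ) < (t:ℝ) ^ (m*m))).mpr hb

end MagicEhrhart

open MagicEhrhart MeasureTheory in
/-- For fixed `n`, the number `|Σ(n,t)|` of `n × n` magic squares with line sum
`t` satisfies `|Σ(n,t)| / t^{(n−1)²} → ρ(n) > 0` as `t → ∞`; the limit `ρ(n)` is
the (suitably normalized) volume of the Birkhoff polytope of `n × n` doubly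
stochastic matrices, i.e. the leading Ehrhart coefficient. -/
theorem magic_squares_ehrhart_limit (n : ℕ) (hn : 0 < n) :
    ∃ ρ : ℝ, 0 < ρ ∧
      Tendsto (fun t : ℕ =>
          (Set.ncard {D : Matrix (Fin n) (Fin n) ℕ |
              (∀ i, ∑ j, D i j = t) ∧ (∀ j, ∑ i, D i j = t)} : ℝ) /
            (t : ℝ) ^ ((n - 1) ^ 2))
        atTop (nhds ρ) := by
  obtain ⟨m, rfl⟩ : ∃ m, n = m + 1 := ⟨n - 1, (Nat.succ_pred_eq_of_pos hn).symm⟩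
  refine ⟨(volume (Kt m 1)).toReal, volume_pos m, ?_⟩
  have he : (m + 1 - 1) ^ 2 = m * m := by simp [sq]
  have hs : ∀ t : ℕ, ({D : Matrix (Fin (m+1)) (Fin (m+1)) ℕ |
      (∀ i, ∑ j, D i j = t) ∧ (∀ j, ∑ i, D i j = t)}).ncard = (Lt m (t:ℝ)).ncard :=
    fun t => ncard_MS m t
  simp only [hs, he]
  exact main_tendsto m
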